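/- For every integer k ≥ 1 and every ρ ∈ [0,1], (1/2π) ∫₀^{2π} e^{ikθ} ( √(1 − ρ² sin²θ) + i ρ sin θ )^k dθ = (−1)^k ρ^k / 2. -/

import Mathlib

open MeasureTheory Set

noncomputable section

namespace Stmt11
def w (ρ θ : ℝ) : ℂ :=
  (Real.sqrt (1 - ρ ^ 2 * Real.sin θ ^ 2) : ℂ) + Complex.I * ((ρ * Real.sin θ : ℝ) : ℂ)

def v (ρ θ : ℝ) : ℂ := Complex.exp (θ * Complex.I) * w ρ θ

def W (ρ θ : ℝ) : ℂ :=
  ((-(ρ ^ 2 * (2 * Real.sin θ * Real.cos θ)) / (2 * Real.sqrt (1 - ρ ^ 2 * Real.sin θ ^ 2)) : ℝ) : ℂ)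
    + Complex.I * ((ρ * Real.cos θ : ℝ) : ℂ)

def V (ρ θ : ℝ) : ℂ :=
  Complex.exp (θ * Complex.I) * Complex.I * w ρ θ + Complex.exp (θ * Complex.I) * W ρ θ

lemma c_pos {ρ : ℝ} (h1 : ρ < 1) (h0 : 0 ≤ ρ) (θ : ℝ) :
    0 < Real.sqrt (1 - ρ ^ 2 * Real.sin θ ^ 2) := by
  apply Real.sqrt_pos.2
  nlinarith [Real.sin_sq_le_one θ, Real.neg_one_le_sin θ, Real.sin_le_one θ]

lemma abs_w {ρ : ℝ} (h1 : ρ ≤ 1) (h0 : 0 ≤ ρ) (θ : ℝ) : ‖w ρ θ‖ = 1 := by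
  have hnn : 0 ≤ 1 - ρ ^ 2 * Real.sin θ ^ 2 := by
    nlinarith [Real.sin_sq_le_one θ]
  have hw : w ρ θ = (Real.sqrt (1 - ρ ^ 2 * Real.sin θ ^ 2) : ℂ)
      + ((ρ * Real.sin θ : ℝ) : ℂ) * Complex.I := by rw [w]; ring
  rw [hw, Complex.norm_add_mul_I, Real.sq_sqrt hnn,
    show 1 - ρ ^ 2 * Real.sin θ ^ 2 + (ρ * Real.sin θ) ^ 2 = 1 by ring, Real.sqrt_one]

lemma abs_v {ρ : ℝ} (h1 : ρ ≤ 1) (h0 : 0 ≤ ρ) (θ : ℝ) : ‖v ρ θ‖ = 1 := by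
  rw [v, norm_mul, abs_w h1 h0, Complex.norm_exp]
  simp

lemma hasDerivAt_w {ρ : ℝ} (h1 : ρ < 1) (h0 : 0 ≤ ρ) (θ : ℝ) :
    HasDerivAt (w ρ) (W ρ θ) θ := by
  have hne : (1 - ρ ^ 2 * Real.sin θ ^ 2) ≠ 0 := by
    have := c_pos h1 h0 θ
    intro h
    rw [h, Real.sqrt_zero] at this; exact lt_irrefl _ this
  have hinner : HasDerivAt (fun θ : ℝ => 1 - ρ ^ 2 * Real.sin θ ^ 2)
      (-(ρ ^ 2 * (2 * Real.sin θ * Real.cos θ))) θ := by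
    have hs : HasDerivAt (fun θ : ℝ => Real.sin θ ^ 2)
        (2 * Real.sin θ * Real.cos θ) θ := by
      simpa using (Real.hasDerivAt_sin θ).fun_pow 2
    simpa using ((hs.const_mul (ρ ^ 2)).const_sub 1)
  have hsqrt : HasDerivAt (fun θ : ℝ => Real.sqrt (1 - ρ ^ 2 * Real.sin θ ^ 2))
      (-(ρ ^ 2 * (2 * Real.sin θ * Real.cos θ)) / (2 * Real.sqrt (1 - ρ ^ 2 * Real.sin θ ^ 2))) θ :=
    hinner.sqrt hne
  have hs2 : HasDerivAt (fun θ : ℝ => ρ * Real.sin θ) (ρ * Real.cos θ) θ :=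
    (Real.hasDerivAt_sin θ).const_mul ρ
  exact (hsqrt.ofReal_comp).add ((hs2.ofReal_comp).const_mul Complex.I)

lemma hasDerivAt_v {ρ : ℝ} (h1 : ρ < 1) (h0 : 0 ≤ ρ) (θ : ℝ) :
    HasDerivAt (v ρ) (V ρ θ) θ := by
  have hexp : HasDerivAt (fun θ : ℝ => Complex.exp (θ * Complex.I))
      (Complex.exp (θ * Complex.I) * Complex.I) θ := by
    have h1 : HasDerivAt (fun θ : ℝ => (θ : ℂ) * Complex.I) Complex.I θ := by
      simpa using ((hasDerivAt_id θ).ofReal_comp).mul_const Complex.I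
    simpa using h1.cexp
  exact hexp.mul (hasDerivAt_w h1 h0 θ)

lemma core (a b c r : ℝ) (hc : c ^ 2 = 1 - r ^ 2 * b ^ 2) (hab : a ^ 2 + b ^ 2 = 1) :
    ((c : ℂ) + r * a) *
        (r * (((a : ℂ) + b * Complex.I) * ((c : ℂ) + (r * b) * Complex.I)) ^ 2
          + 2 * (((a : ℂ) + b * Complex.I) * ((c : ℂ) + (r * b) * Complex.I)) + r)
      = 2 * c * ((((a : ℂ) + b * Complex.I) * ((c : ℂ) + (r * b) * Complex.I)) + r) *
          (1 + r * (((a : ℂ) + b * Complex.I) * ((c : ℂ) + (r * b) * Complex.I))) := by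
  have hI : (Complex.I) ^ 2 = -1 := Complex.I_sq
  have hc' : (c : ℂ) ^ 2 = 1 - (r : ℂ) ^ 2 * (b : ℂ) ^ 2 := by
    have := congrArg (Complex.ofReal) hc; push_cast at this; exact this
  have hab' : (a : ℂ) ^ 2 + (b : ℂ) ^ 2 = 1 := by
    have := congrArg (Complex.ofReal) hab; push_cast at this; exact this
  set A := (a : ℂ); set B := (b : ℂ); set C := (c : ℂ); set R := (r : ℂ)
  set i := Complex.I
  linear_combination
    (-2*B^2*C*R^3 - B^2*C^3*R - 2*B^3*C^2*R^2*i + B^4*C*R^3 - B^4*C*R^3*i^2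
      + 2*A*B^2*R^2 - 3*A*B^2*C^2*R^2 - A*B^4*R^4 + A*B^4*R^4*i^2
      + 3*A^2*B^2*C*R^3 + 2*A^2*B^3*R^4*i + A^3*B^2*R^4) * hI
    + (-2*B*R^2*i + B^2*C*R + 2*B^3*R^2*i - 2*A*R^2 - 2*A*B*C*R*i + 3*A*B^2*R^2
      - A^2*C*R + A^3*R^2) * hc'
    + (C*R + 2*B*R^2*i - 2*B^2*C*R^3 - 2*B^3*R^4*i + A*R^2 + 2*A*B*C*R^3*i
      - 2*A*B^2*R^4) * hab'

lemma v_eq (ρ θ : ℝ) :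
    v ρ θ = ((Real.cos θ : ℂ) + (Real.sin θ : ℂ) * Complex.I) *
      ((Real.sqrt (1 - ρ ^ 2 * Real.sin θ ^ 2) : ℂ) + (ρ : ℂ) * (Real.sin θ : ℂ) * Complex.I) := by
  rw [v, w, Complex.exp_mul_I, ← Complex.ofReal_cos, ← Complex.ofReal_sin]
  push_cast [-Complex.ofReal_sin, -Complex.ofReal_cos]
  ring

lemma cW {ρ : ℝ} (h1 : ρ < 1) (h0 : 0 ≤ ρ) (θ : ℝ) :
    (Real.sqrt (1 - ρ ^ 2 * Real.sin θ ^ 2) : ℂ) * W ρ θ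
      = Complex.I * ((ρ * Real.cos θ : ℝ) : ℂ) * w ρ θ := by
  have hc := c_pos h1 h0 θ
  have hcne : ((Real.sqrt (1 - ρ ^ 2 * Real.sin θ ^ 2) : ℝ) : ℂ) ≠ 0 := by
    exact_mod_cast hc.ne'
  have hc2 : ((Real.sqrt (1 - ρ ^ 2 * Real.sin θ ^ 2) : ℝ) : ℂ) ^ 2
      = 1 - (ρ : ℂ) ^ 2 * (Real.sin θ : ℂ) ^ 2 := by
    have hnn : (0:ℝ) ≤ 1 - ρ ^ 2 * Real.sin θ ^ 2 := by
      nlinarith [Real.sin_sq_le_one θ]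
    have := congrArg (Complex.ofReal) (Real.sq_sqrt hnn)
    push_cast [-Complex.ofReal_sin] at this; exact this
  rw [W, w]
  push_cast [-Complex.ofReal_sin, -Complex.ofReal_cos]
  field_simp
  linear_combination (-((ρ:ℂ) ^ 2 * (Real.cos θ : ℂ) * (Real.sin θ : ℂ))) * Complex.I_sq

lemma cV {ρ : ℝ} (h1 : ρ < 1) (h0 : 0 ≤ ρ) (θ : ℝ) :
    (Real.sqrt (1 - ρ ^ 2 * Real.sin θ ^ 2) : ℂ) * V ρ θ
      = Complex.I * v ρ θ *
        ((Real.sqrt (1 - ρ ^ 2 * Real.sin θ ^ 2) : ℂ) + (ρ : ℂ) * (Real.cos θ : ℂ)) := by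
  have h := cW h1 h0 θ
  rw [V, v]
  calc (Real.sqrt (1 - ρ ^ 2 * Real.sin θ ^ 2) : ℂ) *
        (Complex.exp (θ * Complex.I) * Complex.I * w ρ θ + Complex.exp (θ * Complex.I) * W ρ θ)
      = Complex.exp (θ * Complex.I) * Complex.I * w ρ θ * (Real.sqrt (1 - ρ ^ 2 * Real.sin θ ^ 2) : ℂ)
        + Complex.exp (θ * Complex.I) * ((Real.sqrt (1 - ρ ^ 2 * Real.sin θ ^ 2) : ℂ) * W ρ θ) := by ring
    _ = Complex.exp (θ * Complex.I) * Complex.I * w ρ θ * (Real.sqrt (1 - ρ ^ 2 * Real.sin θ ^ 2) : ℂ)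
        + Complex.exp (θ * Complex.I) * (Complex.I * ((ρ * Real.cos θ : ℝ) : ℂ) * w ρ θ) := by rw [h]
    _ = _ := by push_cast; ring

lemma key {ρ : ℝ} (h1 : ρ < 1) (h0 : 0 ≤ ρ) (θ : ℝ) :
    V ρ θ * ((v ρ θ + ρ) * (1 + ρ * v ρ θ) + v ρ θ * (1 + ρ * v ρ θ) - ρ * v ρ θ * (v ρ θ + ρ))
      = 2 * Complex.I * v ρ θ * ((v ρ θ + ρ) * (1 + ρ * v ρ θ)) := by
  set c := Real.sqrt (1 - ρ ^ 2 * Real.sin θ ^ 2) with hcdef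
  have hcpos := c_pos h1 h0 θ
  have hcne : (c : ℂ) ≠ 0 := by exact_mod_cast hcpos.ne'
  have hc2 : c ^ 2 = 1 - ρ ^ 2 * Real.sin θ ^ 2 := Real.sq_sqrt (by nlinarith [Real.sin_sq_le_one θ])
  have hab : Real.cos θ ^ 2 + Real.sin θ ^ 2 = 1 := Real.cos_sq_add_sin_sq θ
  have hcore := core (Real.cos θ) (Real.sin θ) c ρ hc2 hab
  rw [← v_eq] at hcore
  apply mul_left_cancel₀ hcne
  calc (c : ℂ) * (V ρ θ * ((v ρ θ + ρ) * (1 + ρ * v ρ θ) + v ρ θ * (1 + ρ * v ρ θ)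
          - ρ * v ρ θ * (v ρ θ + ρ)))
      = ((c : ℂ) * V ρ θ) * (ρ * v ρ θ ^ 2 + 2 * v ρ θ + ρ) := by ring
    _ = Complex.I * v ρ θ * (((c : ℂ) + (ρ : ℂ) * (Real.cos θ : ℂ))
          * (ρ * v ρ θ ^ 2 + 2 * v ρ θ + ρ)) := by rw [cV h1 h0 θ]; ring
    _ = Complex.I * v ρ θ * (2 * c * (v ρ θ + ρ) * (1 + ρ * v ρ θ)) := by
          rw [show ((c : ℂ) + (ρ : ℂ) * (Real.cos θ : ℂ)) * (ρ * v ρ θ ^ 2 + 2 * v ρ θ + ρ)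
              = ((c : ℂ) + ρ * Real.cos θ) * (ρ * v ρ θ ^ 2 + 2 * v ρ θ + ρ) by norm_cast]
          rw [hcore]
    _ = _ := by ring

lemma aux_re {z : ℂ} (h : ‖z‖ < 1) : 0 < (1 + z).re := by
  have h1 : |z.re| ≤ ‖z‖ := Complex.abs_re_le_norm z
  have h2 : -‖z‖ ≤ z.re := (abs_le.1 h1).1
  simp only [Complex.add_re, Complex.one_re]
  linarith

def G (ρ : ℝ) (k : ℕ) (θ : ℝ) : ℂ :=
  (1 / (2 * Complex.I)) * (
    v ρ θ ^ k / (k : ℂ)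
    + ∑ j ∈ Finset.range k, (-(ρ : ℂ)) ^ (k - 1 - j) * v ρ θ ^ (j + 1) / ((j : ℂ) + 1)
    + (-(ρ : ℂ)) ^ k * (Complex.I * (θ : ℂ) + Complex.log (w ρ θ)
        + Complex.log (1 + (ρ : ℂ) * (v ρ θ)⁻¹))
    - ∑ j ∈ Finset.range k, (-1 : ℂ) ^ (k - 1 - j) * (ρ : ℂ) ^ (j + 1) / (ρ : ℂ) ^ k
        * v ρ θ ^ (j + 1) / ((j : ℂ) + 1)
    - (-1 : ℂ) ^ k / (ρ : ℂ) ^ k * Complex.log (1 + (ρ : ℂ) * v ρ θ))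

lemma hasDerivAt_G {ρ : ℝ} {k : ℕ} (hρ : 0 < ρ) (h1 : ρ < 1) (hk : 1 ≤ k) (θ : ℝ) :
    HasDerivAt (G ρ k) (v ρ θ ^ k) θ := by
  have h0 : (0:ℝ) ≤ ρ := hρ.le
  have hv := hasDerivAt_v h1 h0 θ
  have hw := hasDerivAt_w h1 h0 θ
  have hvabs : ‖v ρ θ‖ = 1 := abs_v h1.le h0 θ
  have hvne : v ρ θ ≠ 0 := by
    intro h; rw [h] at hvabs; simp at hvabs
  have hcpos := c_pos h1 h0 θ
  have hwre : (w ρ θ).re = Real.sqrt (1 - ρ ^ 2 * Real.sin θ ^ 2) := by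
    simp [w]
  have hwslit : w ρ θ ∈ Complex.slitPlane :=
    Complex.mem_slitPlane_iff.2 (Or.inl (by rw [hwre]; exact hcpos))
  have hwne : w ρ θ ≠ 0 := Complex.slitPlane_ne_zero hwslit
  have habsρv : ‖(ρ : ℂ) * v ρ θ‖ < 1 := by
    rw [norm_mul, hvabs, Complex.norm_real, Real.norm_eq_abs, abs_of_nonneg h0]; simpa using h1
  have habsρvi : ‖(ρ : ℂ) * (v ρ θ)⁻¹‖ < 1 := by
    rw [norm_mul, norm_inv, hvabs, Complex.norm_real, Real.norm_eq_abs, abs_of_nonneg h0]; simpa using h1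
  have hslit2 : 1 + (ρ : ℂ) * (v ρ θ)⁻¹ ∈ Complex.slitPlane :=
    Complex.mem_slitPlane_iff.2 (Or.inl (aux_re habsρvi))
  have hslit3 : 1 + (ρ : ℂ) * v ρ θ ∈ Complex.slitPlane :=
    Complex.mem_slitPlane_iff.2 (Or.inl (aux_re habsρv))
  have h1ρvne : 1 + (ρ : ℂ) * v ρ θ ≠ 0 := Complex.slitPlane_ne_zero hslit3
  have hvρne : v ρ θ + (ρ : ℂ) ≠ 0 := by
    intro h
    have : v ρ θ = -(ρ : ℂ) := by linear_combination h
    rw [this] at hvabs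
    rw [norm_neg, Complex.norm_real, Real.norm_eq_abs, abs_of_nonneg h0] at hvabs
    exact absurd hvabs h1.ne
  have hρne : (ρ : ℂ) ≠ 0 := by exact_mod_cast hρ.ne'
  have hkne : (k : ℂ) ≠ 0 := Nat.cast_ne_zero.2 (by omega)
  -- derivative components
  have hv_pow : ∀ n : ℕ, HasDerivAt (fun t => v ρ t ^ n)
      ((n : ℂ) * v ρ θ ^ (n - 1) * V ρ θ) θ := by
    intro n
    have := (hasDerivAt_pow n (v ρ θ)).comp θ hv
    simpa [Function.comp_def] using this
  have hd1 : HasDerivAt (fun θ => v ρ θ ^ k / (k : ℂ))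
      ((k : ℂ) * v ρ θ ^ (k - 1) * V ρ θ / (k : ℂ)) θ := (hv_pow k).div_const _
  have hd2 : HasDerivAt
      (fun θ => ∑ j ∈ Finset.range k, (-(ρ : ℂ)) ^ (k - 1 - j) * v ρ θ ^ (j + 1) / ((j : ℂ) + 1))
      ((∑ j ∈ Finset.range k, v ρ θ ^ j * (-(ρ : ℂ)) ^ (k - 1 - j)) * V ρ θ) θ := by
    have hraw : HasDerivAt
        (fun θ => ∑ j ∈ Finset.range k, (-(ρ : ℂ)) ^ (k - 1 - j) * v ρ θ ^ (j + 1) / ((j : ℂ) + 1))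
        (∑ j ∈ Finset.range k, (-(ρ : ℂ)) ^ (k - 1 - j)
            * (((j + 1 : ℕ) : ℂ) * v ρ θ ^ (j + 1 - 1) * V ρ θ) / ((j : ℂ) + 1)) θ :=
      HasDerivAt.fun_sum fun j _ => ((hv_pow (j + 1)).const_mul _).div_const _
    convert hraw using 1
    rw [Finset.sum_mul]
    apply Finset.sum_congr rfl
    intro j _
    have hj : ((j : ℂ) + 1) ≠ 0 := Nat.cast_add_one_ne_zero j
    push_cast
    field_simp
  have hd3 : HasDerivAt
      (fun θ : ℝ => (-(ρ : ℂ)) ^ k * (Complex.I * (θ : ℂ) + Complex.log (w ρ θ)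
          + Complex.log (1 + (ρ : ℂ) * (v ρ θ)⁻¹)))
      ((-(ρ : ℂ)) ^ k * (Complex.I + (w ρ θ)⁻¹ * W ρ θ
          + (1 + (ρ : ℂ) * (v ρ θ)⁻¹)⁻¹ * ((ρ : ℂ) * (-(v ρ θ ^ 2)⁻¹ * V ρ θ)))) θ := by
    have h3a : HasDerivAt (fun θ : ℝ => Complex.I * (θ : ℂ)) Complex.I θ := by
      simpa using ((hasDerivAt_id θ).ofReal_comp).const_mul Complex.I
    have h3b : HasDerivAt (fun θ => Complex.log (w ρ θ)) ((w ρ θ)⁻¹ * W ρ θ) θ := by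
      simpa [Function.comp_def] using (Complex.hasDerivAt_log hwslit).comp θ hw
    have hinv : HasDerivAt (fun θ => (v ρ θ)⁻¹) (-(v ρ θ ^ 2)⁻¹ * V ρ θ) θ := by
      simpa [Function.comp_def] using (hasDerivAt_inv hvne).comp θ hv
    have hinner : HasDerivAt (fun θ => 1 + (ρ : ℂ) * (v ρ θ)⁻¹)
        ((ρ : ℂ) * (-(v ρ θ ^ 2)⁻¹ * V ρ θ)) θ := (hinv.const_mul _).const_add 1
    have h3c : HasDerivAt (fun θ => Complex.log (1 + (ρ : ℂ) * (v ρ θ)⁻¹))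
        ((1 + (ρ : ℂ) * (v ρ θ)⁻¹)⁻¹ * ((ρ : ℂ) * (-(v ρ θ ^ 2)⁻¹ * V ρ θ))) θ := by
      simpa [Function.comp_def] using (Complex.hasDerivAt_log hslit2).comp θ hinner
    exact ((h3a.add h3b).add h3c).const_mul _
  have hd4 : HasDerivAt
      (fun θ => ∑ j ∈ Finset.range k, (-1 : ℂ) ^ (k - 1 - j) * (ρ : ℂ) ^ (j + 1) / (ρ : ℂ) ^ k
          * v ρ θ ^ (j + 1) / ((j : ℂ) + 1))
      (((ρ : ℂ) / (ρ : ℂ) ^ k * ∑ j ∈ Finset.range k, ((ρ : ℂ) * v ρ θ) ^ j * (-1 : ℂ) ^ (k - 1 - j))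
        * V ρ θ) θ := by
    have hraw : HasDerivAt
        (fun θ => ∑ j ∈ Finset.range k, (-1 : ℂ) ^ (k - 1 - j) * (ρ : ℂ) ^ (j + 1) / (ρ : ℂ) ^ k
            * v ρ θ ^ (j + 1) / ((j : ℂ) + 1))
        (∑ j ∈ Finset.range k, ((-1 : ℂ) ^ (k - 1 - j) * (ρ : ℂ) ^ (j + 1) / (ρ : ℂ) ^ k)
            * (((j + 1 : ℕ) : ℂ) * v ρ θ ^ (j + 1 - 1) * V ρ θ) / ((j : ℂ) + 1)) θ :=
      HasDerivAt.fun_sum fun j _ => ((hv_pow (j + 1)).const_mul _).div_const _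
    convert hraw using 1
    rw [Finset.mul_sum, Finset.sum_mul]
    apply Finset.sum_congr rfl
    intro j _
    have hj : ((j : ℂ) + 1) ≠ 0 := Nat.cast_add_one_ne_zero j
    push_cast
    field_simp
    ring
  have hd5 : HasDerivAt
      (fun θ => (-1 : ℂ) ^ k / (ρ : ℂ) ^ k * Complex.log (1 + (ρ : ℂ) * v ρ θ))
      ((-1 : ℂ) ^ k / (ρ : ℂ) ^ k * ((1 + (ρ : ℂ) * v ρ θ)⁻¹ * ((ρ : ℂ) * V ρ θ))) θ := by
    have hinner : HasDerivAt (fun θ => 1 + (ρ : ℂ) * v ρ θ) ((ρ : ℂ) * V ρ θ) θ :=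
      (hv.const_mul _).const_add 1
    have := (Complex.hasDerivAt_log hslit3).comp θ hinner
    simpa [Function.comp] using this.const_mul ((-1 : ℂ) ^ k / (ρ : ℂ) ^ k)
  have hG := ((((hd1.add hd2).add hd3).sub hd4).sub hd5).const_mul (1 / (2 * Complex.I))
  have hfinal : (1 / (2 * Complex.I)) * ((k : ℂ) * v ρ θ ^ (k - 1) * V ρ θ / (k : ℂ)
      + (∑ j ∈ Finset.range k, v ρ θ ^ j * (-(ρ : ℂ)) ^ (k - 1 - j)) * V ρ θ
      + (-(ρ : ℂ)) ^ k * (Complex.I + (w ρ θ)⁻¹ * W ρ θ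
          + (1 + (ρ : ℂ) * (v ρ θ)⁻¹)⁻¹ * ((ρ : ℂ) * (-(v ρ θ ^ 2)⁻¹ * V ρ θ)))
      - ((ρ : ℂ) / (ρ : ℂ) ^ k * ∑ j ∈ Finset.range k, ((ρ : ℂ) * v ρ θ) ^ j * (-1 : ℂ) ^ (k - 1 - j))
          * V ρ θ
      - (-1 : ℂ) ^ k / (ρ : ℂ) ^ k * ((1 + (ρ : ℂ) * v ρ θ)⁻¹ * ((ρ : ℂ) * V ρ θ)))
      = v ρ θ ^ k := by
    have hA := geom_sum₂_mul (v ρ θ) (-(ρ:ℂ)) k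
    rw [sub_neg_eq_add] at hA
    have hB := geom_sum₂_mul ((ρ:ℂ) * v ρ θ) (-1:ℂ) k
    rw [sub_neg_eq_add] at hB
    have hkk : v ρ θ ^ (k-1) * v ρ θ = v ρ θ ^ k := by
      conv_rhs => rw [show k = k - 1 + 1 by omega]
      rw [pow_succ]
    have hbr : Complex.I + (w ρ θ)⁻¹ * W ρ θ
        + (1 + (ρ : ℂ) * (v ρ θ)⁻¹)⁻¹ * ((ρ : ℂ) * (-(v ρ θ ^ 2)⁻¹ * V ρ θ))
        = V ρ θ / (v ρ θ + ρ) := by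
      have hvρne' := hvρne
      have hvne' := hvne
      rw [v] at hvρne' hvne' ⊢
      rw [V]
      have hexp : Complex.exp ((θ:ℂ) * Complex.I) ≠ 0 := Complex.exp_ne_zero _
      have hvρne'' : w ρ θ * Complex.exp (Complex.I * θ) + ρ ≠ 0 := by
        rw [mul_comm, mul_comm Complex.I]; exact hvρne'
      field_simp
      ring
    rw [hbr]
    have hkey := key h1 h0 θ
    have e1 : (k:ℂ) * v ρ θ ^ (k-1) * V ρ θ / (k:ℂ) = v ρ θ ^ (k-1) * V ρ θ := by
      field_simp
    have e2 : (∑ j ∈ Finset.range k, v ρ θ ^ j * (-(ρ:ℂ))^(k-1-j)) * V ρ θ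
        + (-(ρ:ℂ))^k * (V ρ θ / (v ρ θ + ρ)) = v ρ θ ^ k * V ρ θ / (v ρ θ + ρ) := by
      field_simp
      linear_combination V ρ θ * hA
    have e3 : ((ρ:ℂ)/(ρ:ℂ)^k * ∑ j ∈ Finset.range k, ((ρ:ℂ) * v ρ θ)^j * (-1:ℂ)^(k-1-j)) * V ρ θ
        + (-1:ℂ)^k/(ρ:ℂ)^k * ((1 + (ρ:ℂ) * v ρ θ)⁻¹ * ((ρ:ℂ) * V ρ θ))
        = (ρ:ℂ) * v ρ θ ^ k * V ρ θ / (1 + (ρ:ℂ) * v ρ θ) := by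
      field_simp
      linear_combination V ρ θ * hB
    calc 1 / (2*Complex.I) * ((k:ℂ) * v ρ θ ^ (k-1) * V ρ θ / (k:ℂ)
          + (∑ j ∈ Finset.range k, v ρ θ ^ j * (-(ρ:ℂ))^(k-1-j)) * V ρ θ
          + (-(ρ:ℂ))^k * (V ρ θ / (v ρ θ + ρ))
          - ((ρ:ℂ)/(ρ:ℂ)^k * ∑ j ∈ Finset.range k, ((ρ:ℂ) * v ρ θ)^j * (-1:ℂ)^(k-1-j)) * V ρ θ
          - (-1:ℂ)^k/(ρ:ℂ)^k * ((1 + (ρ:ℂ) * v ρ θ)⁻¹ * ((ρ:ℂ) * V ρ θ)))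
        = 1 / (2*Complex.I) * ((v ρ θ ^ (k-1) * V ρ θ)
          + ((∑ j ∈ Finset.range k, v ρ θ ^ j * (-(ρ:ℂ))^(k-1-j)) * V ρ θ
            + (-(ρ:ℂ))^k * (V ρ θ / (v ρ θ + ρ)))
          - (((ρ:ℂ)/(ρ:ℂ)^k * ∑ j ∈ Finset.range k, ((ρ:ℂ) * v ρ θ)^j * (-1:ℂ)^(k-1-j)) * V ρ θ
            + (-1:ℂ)^k/(ρ:ℂ)^k * ((1 + (ρ:ℂ) * v ρ θ)⁻¹ * ((ρ:ℂ) * V ρ θ)))) := by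
          rw [e1]; ring
      _ = 1 / (2*Complex.I) * (v ρ θ ^ (k-1) * V ρ θ
          + v ρ θ ^ k * V ρ θ / (v ρ θ + ρ)
          - (ρ:ℂ) * v ρ θ ^ k * V ρ θ / (1 + (ρ:ℂ) * v ρ θ)) := by rw [e2, e3]
      _ = v ρ θ ^ k := by
          rw [hkk.symm]
          have h1ρvne' : 1 + v ρ θ * ρ ≠ 0 := by rw [mul_comm]; exact h1ρvne
          field_simp [Complex.I_ne_zero]
          linear_combination hkey
  exact hfinal ▸ hG

lemma w_zero (ρ : ℝ) : w ρ 0 = 1 := by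
  simp [w]

lemma w_two_pi (ρ : ℝ) : w ρ (2 * Real.pi) = 1 := by
  simp [w, Real.sin_two_pi]

lemma v_zero (ρ : ℝ) : v ρ 0 = 1 := by
  simp [v, w_zero]

lemma v_two_pi (ρ : ℝ) : v ρ (2 * Real.pi) = 1 := by
  rw [v, w_two_pi, mul_one]
  rw [show ((2 * Real.pi : ℝ) : ℂ) * Complex.I = 2 * (Real.pi : ℂ) * Complex.I by push_cast; ring]
  exact Complex.exp_two_pi_mul_I

lemma cont_v_pow (ρ : ℝ) (k : ℕ) : Continuous (fun θ => v ρ θ ^ k) := by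
  apply Continuous.pow
  apply Continuous.mul
  · exact Complex.continuous_exp.comp (Complex.continuous_ofReal.mul continuous_const)
  · apply Continuous.add
    · exact Complex.continuous_ofReal.comp
        ((Real.continuous_sqrt).comp (by continuity))
    · exact continuous_const.mul (Complex.continuous_ofReal.comp (by continuity))

lemma integral_main {ρ : ℝ} (hρ : 0 < ρ) (h1 : ρ < 1) {k : ℕ} (hk : 1 ≤ k) :
    ∫ θ in (0:ℝ)..(2 * Real.pi), v ρ θ ^ k = (-(ρ : ℂ)) ^ k * (Real.pi : ℂ) := by
  rw [intervalIntegral.integral_eq_sub_of_hasDerivAt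
      (fun θ _ => hasDerivAt_G hρ h1 hk θ)
      ((cont_v_pow ρ k).intervalIntegrable 0 (2 * Real.pi))]
  rw [G, G, v_zero, v_two_pi, w_zero, w_two_pi]
  have hI := Complex.I_ne_zero
  push_cast
  field_simp
  ring

lemma cont_w (ρ : ℝ) : Continuous (w ρ) := by
  apply Continuous.add
  · exact Complex.continuous_ofReal.comp ((Real.continuous_sqrt).comp (by continuity))
  · exact continuous_const.mul (Complex.continuous_ofReal.comp (by continuity))

lemma cont_f (ρ : ℝ) (k : ℕ) :
    Continuous (fun θ : ℝ => Complex.exp (Complex.I * k * θ) * w ρ θ ^ k) := by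
  apply Continuous.mul
  · exact Complex.continuous_exp.comp (continuous_const.mul Complex.continuous_ofReal)
  · exact (cont_w ρ).pow k

lemma integral_rho_one {k : ℕ} (hk : 1 ≤ k) :
    ∫ θ in (0:ℝ)..(2 * Real.pi), Complex.exp (Complex.I * k * θ) * w 1 θ ^ k
      = (-1 : ℂ) ^ k * (Real.pi : ℂ) := by
  have hπ := Real.pi_pos
  set f := fun θ : ℝ => Complex.exp (Complex.I * k * θ) * w 1 θ ^ k with hf
  have hint : ∀ a b : ℝ, IntervalIntegrable f volume a b :=
    fun a b => (cont_f 1 k).intervalIntegrable a b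
  have hkC : ((k : ℂ)) ≠ 0 := Nat.cast_ne_zero.2 (by omega)
  have hc : (2 * Complex.I * k) ≠ 0 := by
    simp [Complex.I_ne_zero, hkC]
  -- piece 1 : [0, π/2]
  have hp1 : ∫ θ in (0:ℝ)..(Real.pi/2), f θ
      = ∫ θ in (0:ℝ)..(Real.pi/2), Complex.exp ((2 * Complex.I * k) * θ) := by
    apply intervalIntegral.integral_congr
    intro θ hθ
    rw [Set.uIcc_of_le (by linarith)] at hθ
    obtain ⟨hθ0, hθ1⟩ := hθ
    have hcos : 0 ≤ Real.cos θ :=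
      Real.cos_nonneg_of_mem_Icc ⟨by linarith, hθ1⟩
    have hsq : Real.sqrt (1 - 1 ^ 2 * Real.sin θ ^ 2) = Real.cos θ := by
      rw [show 1 - 1 ^ 2 * Real.sin θ ^ 2 = Real.cos θ ^ 2 by rw [Real.cos_sq']; ring]
      exact Real.sqrt_sq hcos
    have hw : w 1 θ = Complex.exp ((θ : ℂ) * Complex.I) := by
      rw [w, hsq, Complex.exp_mul_I, ← Complex.ofReal_cos, ← Complex.ofReal_sin]
      push_cast [-Complex.ofReal_sin, -Complex.ofReal_cos]
      ring
    simp only [hf]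
    rw [hw, ← Complex.exp_nat_mul, ← Complex.exp_add]
    congr 1
    push_cast
    ring
  -- piece 2 : [π/2, 3π/2]
  have hp2 : ∫ θ in (Real.pi/2)..(3*Real.pi/2), f θ
      = ∫ θ in (Real.pi/2)..(3*Real.pi/2), ((-1 : ℂ) ^ k) := by
    apply intervalIntegral.integral_congr
    intro θ hθ
    rw [Set.uIcc_of_le (by linarith)] at hθ
    obtain ⟨hθ0, hθ1⟩ := hθ
    have hcos : Real.cos θ ≤ 0 :=
      Real.cos_nonpos_of_pi_div_two_le_of_le hθ0 (by linarith)
    have hsq : Real.sqrt (1 - 1 ^ 2 * Real.sin θ ^ 2) = -Real.cos θ := by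
      rw [show 1 - 1 ^ 2 * Real.sin θ ^ 2 = Real.cos θ ^ 2 by rw [Real.cos_sq']; ring]
      rw [Real.sqrt_sq_eq_abs, abs_of_nonpos hcos]
    have hw : w 1 θ = -Complex.exp (-((θ : ℂ) * Complex.I)) := by
      rw [w, hsq, ← neg_mul, Complex.exp_mul_I]
      rw [show (-(θ:ℂ)) = ((-θ : ℝ) : ℂ) by push_cast; ring]
      rw [← Complex.ofReal_cos, ← Complex.ofReal_sin, Real.cos_neg, Real.sin_neg]
      push_cast [-Complex.ofReal_sin, -Complex.ofReal_cos]
      ring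
    simp only [hf]
    rw [hw, neg_pow, ← Complex.exp_nat_mul, mul_comm ((-1:ℂ)^k) _, ← mul_assoc,
      ← Complex.exp_add,
      show Complex.I * (k:ℂ) * (θ:ℂ) + (k:ℂ) * -((θ:ℂ) * Complex.I) = 0 by push_cast; ring,
      Complex.exp_zero, one_mul]
  -- piece 3 : [3π/2, 2π]
  have hp3 : ∫ θ in (3*Real.pi/2)..(2*Real.pi), f θ
      = ∫ θ in (3*Real.pi/2)..(2*Real.pi), Complex.exp ((2 * Complex.I * k) * θ) := by
    apply intervalIntegral.integral_congr
    intro θ hθ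
    rw [Set.uIcc_of_le (by linarith)] at hθ
    obtain ⟨hθ0, hθ1⟩ := hθ
    have hcos : 0 ≤ Real.cos θ := by
      have : Real.cos (θ - 2*Real.pi) = Real.cos θ := Real.cos_sub_two_pi θ
      rw [← this]
      exact Real.cos_nonneg_of_mem_Icc ⟨by linarith, by linarith⟩
    have hsq : Real.sqrt (1 - 1 ^ 2 * Real.sin θ ^ 2) = Real.cos θ := by
      rw [show 1 - 1 ^ 2 * Real.sin θ ^ 2 = Real.cos θ ^ 2 by rw [Real.cos_sq']; ring]
      exact Real.sqrt_sq hcos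
    have hw : w 1 θ = Complex.exp ((θ : ℂ) * Complex.I) := by
      rw [w, hsq, Complex.exp_mul_I, ← Complex.ofReal_cos, ← Complex.ofReal_sin]
      push_cast [-Complex.ofReal_sin, -Complex.ofReal_cos]
      ring
    simp only [hf]
    rw [hw, ← Complex.exp_nat_mul, ← Complex.exp_add]
    congr 1
    push_cast
    ring
  have hsplit : ∫ θ in (0:ℝ)..(2*Real.pi), f θ
      = (∫ θ in (0:ℝ)..(Real.pi/2), f θ) + (∫ θ in (Real.pi/2)..(3*Real.pi/2), f θ)
        + (∫ θ in (3*Real.pi/2)..(2*Real.pi), f θ) := by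
    rw [intervalIntegral.integral_add_adjacent_intervals (hint _ _) (hint _ _),
        intervalIntegral.integral_add_adjacent_intervals (hint _ _) (hint _ _)]
  rw [hsplit, hp1, hp2, hp3]
  rw [integral_exp_mul_complex hc, integral_exp_mul_complex hc,
      intervalIntegral.integral_const]
  have e1 : Complex.exp (2 * Complex.I * k * ((Real.pi/2 : ℝ) : ℂ)) = (-1 : ℂ) ^ k := by
    rw [show (2 : ℂ) * Complex.I * k * ((Real.pi/2 : ℝ) : ℂ)
        = (k : ℂ) * ((Real.pi : ℂ) * Complex.I) by push_cast; ring]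
    rw [Complex.exp_nat_mul, Complex.exp_pi_mul_I]
  have e2 : Complex.exp (2 * Complex.I * k * ((3*Real.pi/2 : ℝ) : ℂ)) = (-1 : ℂ) ^ k := by
    rw [show (2 : ℂ) * Complex.I * k * ((3*Real.pi/2 : ℝ) : ℂ)
        = (k : ℂ) * ((Real.pi : ℂ) * Complex.I + (2 * Real.pi * Complex.I)) by push_cast; ring]
    rw [Complex.exp_nat_mul, Complex.exp_add, Complex.exp_pi_mul_I, Complex.exp_two_pi_mul_I,
      mul_one]
  have e3 : Complex.exp (2 * Complex.I * k * ((2*Real.pi : ℝ) : ℂ)) = 1 := by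
    rw [show (2 : ℂ) * Complex.I * k * ((2*Real.pi : ℝ) : ℂ)
        = ((2*k : ℕ) : ℂ) * (2 * Real.pi * Complex.I) by push_cast; ring]
    exact_mod_cast Complex.exp_int_mul_two_pi_mul_I (2*k : ℕ)
  have e0 : Complex.exp (2 * Complex.I * k * ((0 : ℝ) : ℂ)) = 1 := by
    norm_num
  rw [e1, e2, e3, e0]
  rw [Complex.real_smul]
  rw [show ((3*Real.pi/2 - Real.pi/2 : ℝ) : ℂ) = (Real.pi : ℂ) by push_cast; ring]
  field_simp
  ring

end Stmt11

/-- For every `k ≥ 1` and `ρ ∈ [0,1]`,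
`(1/2π) ∫₀^{2π} e^{ikθ} (√(1 - ρ² sin²θ) + iρ sin θ)^k dθ = (-1)^k ρ^k / 2`. -/
theorem statement11 (k : ℕ) (hk : 1 ≤ k) (ρ : ℝ) (h0 : 0 ≤ ρ) (h1 : ρ ≤ 1) :
    (1 / (2 * (Real.pi : ℂ))) *
      ∫ θ in (0:ℝ)..(2 * Real.pi),
        Complex.exp (Complex.I * k * θ) *
          ((Real.sqrt (1 - ρ ^ 2 * Real.sin θ ^ 2) : ℂ)
            + Complex.I * ((ρ * Real.sin θ : ℝ) : ℂ)) ^ k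
    = (-1 : ℂ) ^ k * (ρ : ℂ) ^ k / 2 := by
  have hπ : ((Real.pi : ℂ)) ≠ 0 := Complex.ofReal_ne_zero.2 Real.pi_ne_zero
  have hkC : ((k : ℂ)) ≠ 0 := Nat.cast_ne_zero.2 (by omega)
  show (1 / (2 * (Real.pi : ℂ))) *
      ∫ θ in (0:ℝ)..(2 * Real.pi),
        Complex.exp (Complex.I * k * θ) * Stmt11.w ρ θ ^ k
    = (-1 : ℂ) ^ k * (ρ : ℂ) ^ k / 2
  rcases eq_or_lt_of_le h0 with h0' | hρpos
  · -- ρ = 0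
    subst h0'
    have hfeq : ∀ θ : ℝ, Complex.exp (Complex.I * k * θ) * Stmt11.w 0 θ ^ k
        = Complex.exp (Complex.I * (k : ℂ) * (θ : ℂ)) := by
      intro θ
      rw [show Stmt11.w 0 θ = 1 by simp [Stmt11.w]]
      simp
    rw [intervalIntegral.integral_congr (fun θ _ => hfeq θ)]
    rw [integral_exp_mul_complex (mul_ne_zero Complex.I_ne_zero hkC)]
    rw [show Complex.I * (k:ℂ) * ((2*Real.pi : ℝ):ℂ) = ((k:ℤ):ℂ) * (2*Real.pi*Complex.I) by
      push_cast; ring]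
    rw [Complex.exp_int_mul_two_pi_mul_I]
    simp [zero_pow (show k ≠ 0 by omega)]
  rcases lt_or_eq_of_le h1 with h1' | h1'
  · -- 0 < ρ < 1
    have hfeq : ∀ θ : ℝ, Complex.exp (Complex.I * k * θ) * Stmt11.w ρ θ ^ k
        = Stmt11.v ρ θ ^ k := by
      intro θ
      rw [Stmt11.v, mul_pow, ← Complex.exp_nat_mul]
      congr 2
      push_cast
      ring
    rw [intervalIntegral.integral_congr (fun θ _ => hfeq θ)]
    rw [Stmt11.integral_main hρpos h1' hk, neg_pow]
    field_simp
  · -- ρ = 1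
    subst h1'
    rw [Stmt11.integral_rho_one hk]
    rw [Complex.ofReal_one, one_pow]
    field_simp
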